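/- For any J, J' : S → ℝ and any positive integer k, the k-fold iterate of B_m satisfies max_{i ∈ S} |(B_m^k J)(i) − (B_m^k J')(i)| ≤ α^k · max_{i ∈ S} |J(i) − J'(i)|. -/

import Mathlib

open Finset Filter

/-- The randomized mini-batch Bellman operator `B_m`. States are `Fin n`
(0-indexed version of `{1,…,n}`); the set `M_m(i)` of already-updated states
consists of the `j` with `(j : ℕ) < m * (i / m)` (the 0-indexed version of
`{1,…,m⌊(i-1)/m⌋}`). The operator is defined recursively in `i`. -/
noncomputable def Bm (n m : ℕ) (U : Fin n → Finset ℕ) (hU : ∀ i, (U i).Nonempty)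
    (p : Fin n → ℕ → Fin n → ℝ) (g : Fin n → ℕ → ℝ) (α : ℝ)
    (J : Fin n → ℝ) (i : Fin n) : ℝ :=
  (U i).inf' (hU i) fun u =>
    g i u
      + α * ∑ j : Fin n, (if (j : ℕ) < m * ((i : ℕ) / m) then 0 else p i u j * J j)
      + α * ∑ j : {j : Fin n // (j : ℕ) < m * ((i : ℕ) / m)},
          p i u j.1 * Bm n m U hU p g α J j.1
termination_by (i : ℕ)
decreasing_by exact lt_of_lt_of_le j.2 (Nat.mul_div_le _ _)

/-- The standard Bellman operator `T`. -/
noncomputable def Bell (n : ℕ) (U : Fin n → Finset ℕ) (hU : ∀ i, (U i).Nonempty)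
    (p : Fin n → ℕ → Fin n → ℝ) (g : Fin n → ℕ → ℝ) (α : ℝ)
    (J : Fin n → ℝ) (i : Fin n) : ℝ :=
  (U i).inf' (hU i) fun u => g i u + α * ∑ j : Fin n, p i u j * J j

lemma abs_inf'_sub_inf'_le {s : Finset ℕ} (hs : s.Nonempty) (f g : ℕ → ℝ) (c : ℝ)
    (h : ∀ u ∈ s, |f u - g u| ≤ c) : |s.inf' hs f - s.inf' hs g| ≤ c := by
  rw [abs_sub_le_iff]
  constructor
  · obtain ⟨u, hu, hgu⟩ := s.exists_mem_eq_inf' hs g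
    rw [hgu]
    calc s.inf' hs f - g u ≤ f u - g u := sub_le_sub_right (inf'_le _ hu) _
      _ ≤ |f u - g u| := le_abs_self _
      _ ≤ c := h u hu
  · obtain ⟨u, hu, hfu⟩ := s.exists_mem_eq_inf' hs f
    rw [hfu]
    calc s.inf' hs g - f u ≤ g u - f u := sub_le_sub_right (inf'_le _ hu) _
      _ ≤ |f u - g u| := by rw [abs_sub_comm]; exact le_abs_self _
      _ ≤ c := h u hu

lemma Bm_pointwise (n m : ℕ) (U : Fin n → Finset ℕ) (hU : ∀ i, (U i).Nonempty)
    (p : Fin n → ℕ → Fin n → ℝ) (hp : ∀ i u j, 0 ≤ p i u j)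
    (hpsum : ∀ i u, ∑ j : Fin n, p i u j = 1)
    (g : Fin n → ℕ → ℝ) (α : ℝ) (hα0 : 0 < α) (hα1 : α < 1)
    (J J' : Fin n → ℝ) (D : ℝ) (hD0 : 0 ≤ D) (hD : ∀ j, |J j - J' j| ≤ D) :
    ∀ i : Fin n, |Bm n m U hU p g α J i - Bm n m U hU p g α J' i| ≤ α * D := by
  suffices H : ∀ N : ℕ, ∀ i : Fin n, (i : ℕ) < N →
      |Bm n m U hU p g α J i - Bm n m U hU p g α J' i| ≤ α * D from
    fun i => H ((i : ℕ) + 1) i (Nat.lt_succ_self _)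
  intro N
  induction N with
  | zero => intro i hi; omega
  | succ N IHN =>
    intro i hiN
    have IH : ∀ j : Fin n, (j : ℕ) < (i : ℕ) →
        |Bm n m U hU p g α J j - Bm n m U hU p g α J' j| ≤ α * D :=
      fun j hj => IHN j (by omega)
    rw [Bm, Bm]
    apply abs_inf'_sub_inf'_le
    intro u hu
    have key : ∀ j : {j : Fin n // (j : ℕ) < m * ((i : ℕ) / m)},
        |Bm n m U hU p g α J j.1 - Bm n m U hU p g α J' j.1| ≤ D := by
      intro j
      have := IH j.1 (lt_of_lt_of_le j.2 (Nat.mul_div_le _ _))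
      exact this.trans (by nlinarith)
    have expand :
        (g i u + α * ∑ j : Fin n, (if (j : ℕ) < m * ((i : ℕ) / m) then 0 else p i u j * J j)
          + α * ∑ j : {j : Fin n // (j : ℕ) < m * ((i : ℕ) / m)},
              p i u j.1 * Bm n m U hU p g α J j.1)
        - (g i u + α * ∑ j : Fin n, (if (j : ℕ) < m * ((i : ℕ) / m) then 0 else p i u j * J' j)
          + α * ∑ j : {j : Fin n // (j : ℕ) < m * ((i : ℕ) / m)},
              p i u j.1 * Bm n m U hU p g α J' j.1)
        = α * (∑ j : Fin n, (if (j : ℕ) < m * ((i : ℕ) / m) then 0 else p i u j * (J j - J' j)))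
          + α * (∑ j : {j : Fin n // (j : ℕ) < m * ((i : ℕ) / m)},
              p i u j.1 * (Bm n m U hU p g α J j.1 - Bm n m U hU p g α J' j.1)) := by
      have h1 : (∑ j : Fin n, (if (j : ℕ) < m * ((i : ℕ) / m) then 0 else p i u j * (J j - J' j)))
          = (∑ j : Fin n, (if (j : ℕ) < m * ((i : ℕ) / m) then 0 else p i u j * J j))
            - (∑ j : Fin n, (if (j : ℕ) < m * ((i : ℕ) / m) then 0 else p i u j * J' j)) := by
        rw [← Finset.sum_sub_distrib]
        exact Finset.sum_congr rfl fun j _ => by split <;> ring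
      have h2 : (∑ j : {j : Fin n // (j : ℕ) < m * ((i : ℕ) / m)},
            p i u j.1 * (Bm n m U hU p g α J j.1 - Bm n m U hU p g α J' j.1))
          = (∑ j : {j : Fin n // (j : ℕ) < m * ((i : ℕ) / m)},
              p i u j.1 * Bm n m U hU p g α J j.1)
            - (∑ j : {j : Fin n // (j : ℕ) < m * ((i : ℕ) / m)},
              p i u j.1 * Bm n m U hU p g α J' j.1) := by
        rw [← Finset.sum_sub_distrib]
        exact Finset.sum_congr rfl fun j _ => by ring
      rw [h1, h2]; ring
    rw [expand]
    calc |α * (∑ j : Fin n, (if (j : ℕ) < m * ((i : ℕ) / m) then 0 else p i u j * (J j - J' j)))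
          + α * (∑ j : {j : Fin n // (j : ℕ) < m * ((i : ℕ) / m)},
              p i u j.1 * (Bm n m U hU p g α J j.1 - Bm n m U hU p g α J' j.1))|
        ≤ α * (∑ j : Fin n, (if (j : ℕ) < m * ((i : ℕ) / m) then 0 else p i u j * D))
          + α * (∑ j : {j : Fin n // (j : ℕ) < m * ((i : ℕ) / m)}, p i u j.1 * D) := by
          refine (abs_add_le _ _).trans (add_le_add ?_ ?_)
          · rw [abs_mul, abs_of_pos hα0]
            refine mul_le_mul_of_nonneg_left ((Finset.abs_sum_le_sum_abs _ _).trans ?_) hα0.le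
            refine Finset.sum_le_sum fun j _ => ?_
            split
            · simpa using mul_nonneg (hp i u j) hD0
            · rw [abs_mul, abs_of_nonneg (hp i u j)]
              exact mul_le_mul_of_nonneg_left (hD j) (hp i u j)
          · rw [abs_mul, abs_of_pos hα0]
            refine mul_le_mul_of_nonneg_left ((Finset.abs_sum_le_sum_abs _ _).trans ?_) hα0.le
            refine Finset.sum_le_sum fun j _ => ?_
            rw [abs_mul, abs_of_nonneg (hp i u j.1)]
            exact mul_le_mul_of_nonneg_left (key j) (hp i u j.1)
      _ = α * D := by
          rw [← mul_add]
          congr 1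
          have hsub : (∑ j : {j : Fin n // (j : ℕ) < m * ((i : ℕ) / m)}, p i u j.1 * D)
              = ∑ j : Fin n, (if (j : ℕ) < m * ((i : ℕ) / m) then p i u j * D else 0) := by
            rw [← Finset.sum_filter]
            exact (Finset.sum_subtype
              (s := Finset.univ.filter fun j : Fin n => (j : ℕ) < m * ((i : ℕ) / m))
              (fun x => by simp) (fun j => p i u j * D)).symm
          rw [hsub, ← Finset.sum_add_distrib]
          have : ∀ j : Fin n, ((if (j : ℕ) < m * ((i : ℕ) / m) then 0 else p i u j * D)
              + if (j : ℕ) < m * ((i : ℕ) / m) then p i u j * D else 0) = p i u j * D := by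
            intro j; split <;> ring
          rw [Finset.sum_congr rfl fun j _ => this j, ← Finset.sum_mul, hpsum, one_mul]

/-- `α^k`-contractivity of the `k`-fold iterate of the mini-batch operator. -/
theorem Bm_iterate_contraction (n m : ℕ) (hm1 : 1 ≤ m) (hmn : m ≤ n)
    (U : Fin n → Finset ℕ) (hU : ∀ i, (U i).Nonempty)
    (p : Fin n → ℕ → Fin n → ℝ) (hp : ∀ i u j, 0 ≤ p i u j)
    (hpsum : ∀ i u, ∑ j : Fin n, p i u j = 1)
    (g : Fin n → ℕ → ℝ) (α : ℝ) (hα0 : 0 < α) (hα1 : α < 1)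
    (J J' : Fin n → ℝ) (k : ℕ) (hk : 1 ≤ k) :
    (⨆ i : Fin n, |(Bm n m U hU p g α)^[k] J i - (Bm n m U hU p g α)^[k] J' i|)
      ≤ α ^ k * ⨆ i : Fin n, |J i - J' i| := by
  have hn : 0 < n := hm1.trans hmn
  haveI : Nonempty (Fin n) := ⟨⟨0, hn⟩⟩
  set D := ⨆ i : Fin n, |J i - J' i| with hDdef
  have hD0 : 0 ≤ D := Real.iSup_nonneg fun i => abs_nonneg _
  have hmain : ∀ k : ℕ,
      (⨆ i : Fin n, |(Bm n m U hU p g α)^[k] J i - (Bm n m U hU p g α)^[k] J' i|)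
        ≤ α ^ k * D := by
    intro k
    induction k with
    | zero => simp [hDdef]
    | succ k ih =>
      rw [Function.iterate_succ_apply', Function.iterate_succ_apply']
      refine ciSup_le fun i => ?_
      have hle : (Bm n m U hU p g α)^[k] J i - (Bm n m U hU p g α)^[k] J' i = _ := rfl
      have hpt := Bm_pointwise n m U hU p hp hpsum g α hα0 hα1
        ((Bm n m U hU p g α)^[k] J) ((Bm n m U hU p g α)^[k] J') (α ^ k * D)
        (mul_nonneg (pow_nonneg hα0.le k) hD0)
        (fun j => le_trans (le_ciSup (f := fun i : Fin n =>
          |(Bm n m U hU p g α)^[k] J i - (Bm n m U hU p g α)^[k] J' i|)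
          (Set.Finite.bddAbove (Set.finite_range _)) j) ih) i
      calc |Bm n m U hU p g α ((Bm n m U hU p g α)^[k] J) i
            - Bm n m U hU p g α ((Bm n m U hU p g α)^[k] J') i| ≤ α * (α ^ k * D) := hpt
        _ = α ^ (k + 1) * D := by ring
  exact hmain k
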